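/- arXiv:1806.00357 — 2 statements merged into one kernel-verified Lean document; each statement's English description precedes it below -/
import Mathlib

section
/- The linear span of Dirac measures at rational points, span{δ_x : x ∈ ℚ^d}, is dense in the space of bounded Radon measures M(ℝ^d) with respect to the dual norm of C^{1+α}(ℝ^d). Consequently, the closure Z of M(ℝ^d) in (C^{1+α}(ℝ^d))* is a separable Banach space. -/
open MeasureTheory Metric Filter
open scoped NNReal ENNReal BigOperators Topology

noncomputable section

/-- Euclidean space ℝ^d. -/
abbrev Ed (d : ℕ) : Type := EuclideanSpace ℝ (Fin d)

/-- The α-Hölder seminorm of the gradient map `g = fderiv ℝ f`. -/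
def holderSemi {d : ℕ} (α : ℝ) (g : Ed d → (Ed d →L[ℝ] ℝ)) : ℝ :=
  ⨆ x, ⨆ y, ‖g x - g y‖ / dist x y ^ α

/-- The C^{1+α} norm: sup|f| + sup|∇f| + α-Hölder seminorm of ∇f. -/
def c1aNorm {d : ℕ} (α : ℝ) (f : Ed d → ℝ) : ℝ :=
  (⨆ x, |f x|) + (⨆ x, ‖fderiv ℝ f x‖) + holderSemi α (fderiv ℝ f)

/-- Membership in C^{1+α}(ℝ^d): bounded C¹ function with bounded, α-Hölder gradient. -/
def MemC1a {d : ℕ} (α : ℝ) (f : Ed d → ℝ) : Prop :=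
  ContDiff ℝ 1 f ∧ BddAbove (Set.range fun x => |f x|) ∧
    BddAbove (Set.range fun x => ‖fderiv ℝ f x‖) ∧
    ∃ C : ℝ≥0, HolderWith C α.toNNReal (fderiv ℝ f)

/-- The dual norm on (C^{1+α}(ℝ^d))*, applied to a (not necessarily linear)
functional `L` on functions: sup of |L f| over ‖f‖_{C^{1+α}} ≤ 1. -/
def dualNorm {d : ℕ} (α : ℝ) (L : (Ed d → ℝ) → ℝ) : ℝ :=
  sSup {r | ∃ f, MemC1a α f ∧ c1aNorm α f ≤ 1 ∧ r = |L f|}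

/-- Integration pairing of a finite signed (bounded Radon) measure against a function,
via the Jordan decomposition. -/
def sPair {d : ℕ} (s : SignedMeasure (Ed d)) (f : Ed d → ℝ) : ℝ :=
  (∫ x, f x ∂s.toJordanDecomposition.posPart) - ∫ x, f x ∂s.toJordanDecomposition.negPart

/-- A point of ℝ^d with all coordinates rational. -/
def IsRatPoint {d : ℕ} (x : Ed d) : Prop := ∀ i, ∃ q : ℚ, x i = (q : ℝ)

/-- Membership in Z, the closure of M(ℝ^d) in (C^{1+α}(ℝ^d))*: a functional that is
approximated in dual norm by (functionals induced by) bounded Radon measures. -/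
def InZM {d : ℕ} (α : ℝ) (z : (Ed d → ℝ) → ℝ) : Prop :=
  ∀ ε > (0 : ℝ), ∃ s : SignedMeasure (Ed d), dualNorm α (fun f => z f - sPair s f) ≤ ε

section Helpers

variable {d : ℕ} {α : ℝ}

lemma memC1a_zero (hα : 0 < α) : MemC1a (d := d) α (fun _ => 0) := by
  refine ⟨contDiff_const, ?_, ?_, 0, ?_⟩
  · refine ⟨0, ?_⟩
    rintro r ⟨x, rfl⟩
    simp
  · refine ⟨0, ?_⟩
    rintro r ⟨x, rfl⟩
    simp [fderiv_const]
  · intro x y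
    simp [fderiv_const]

lemma c1aNorm_zero (hα : 0 < α) : c1aNorm (d := d) α (fun _ => 0) = 0 := by
  have h0 : fderiv ℝ (fun _ : Ed d => (0:ℝ)) = fun _ => 0 := by
    ext x : 1; simp [fderiv_const]
  simp only [c1aNorm, holderSemi, h0, abs_zero, sub_self, norm_zero, zero_div, ciSup_const]
  norm_num

/-- If `|L f| ≤ B` on the unit ball, then `dualNorm α L ≤ B`. -/
lemma dualNorm_le (hα : 0 < α) {L : (Ed d → ℝ) → ℝ} {B : ℝ}
    (hB : ∀ f, MemC1a α f → c1aNorm α f ≤ 1 → |L f| ≤ B) : dualNorm α L ≤ B := by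
  apply csSup_le
  · exact ⟨|L (fun _ => 0)|, ⟨fun _ => 0, memC1a_zero hα, by rw [c1aNorm_zero hα]; norm_num, rfl⟩⟩
  · rintro r ⟨f, hf, hn, rfl⟩
    exact hB f hf hn

lemma holderSemi_nonneg (g : Ed d → (Ed d →L[ℝ] ℝ)) : 0 ≤ holderSemi α g :=
  Real.iSup_nonneg fun x => Real.iSup_nonneg fun y =>
    div_nonneg (norm_nonneg _) (Real.rpow_nonneg dist_nonneg α)

lemma abs_le_one_of_mem {f : Ed d → ℝ} (hf : MemC1a α f) (hn : c1aNorm α f ≤ 1) :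
    ∀ x, |f x| ≤ 1 := by
  intro x
  have h1 : 0 ≤ ⨆ x, ‖fderiv ℝ f x‖ := Real.iSup_nonneg fun x => norm_nonneg _
  have h2 : 0 ≤ holderSemi α (fderiv ℝ f) := holderSemi_nonneg _
  have hle : (⨆ x, |f x|) ≤ 1 := by
    have := hn; unfold c1aNorm at this; linarith
  exact le_trans (le_ciSup hf.2.1 x) hle

lemma lipschitz_of_mem {f : Ed d → ℝ} (hf : MemC1a α f) (hn : c1aNorm α f ≤ 1) :
    ∀ x y, |f x - f y| ≤ dist x y := by
  have h0 : 0 ≤ ⨆ x, |f x| := Real.iSup_nonneg fun x => abs_nonneg _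
  have h2 : 0 ≤ holderSemi α (fderiv ℝ f) := holderSemi_nonneg _
  have hle : (⨆ x, ‖fderiv ℝ f x‖) ≤ 1 := by
    have := hn; unfold c1aNorm at this; linarith
  have hb : ∀ x, ‖fderiv ℝ f x‖₊ ≤ 1 := by
    intro x
    rw [← NNReal.coe_le_coe]
    exact le_trans (le_ciSup hf.2.2.1 x) hle
  have hlip : LipschitzWith 1 f :=
    lipschitzWith_of_nnnorm_fderiv_le (hf.1.differentiable one_ne_zero) hb
  intro x y
  have := hlip.dist_le_mul x y
  rwa [Real.dist_eq, NNReal.coe_one, one_mul] at this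

lemma integrable_of_bounded {ν : Measure (Ed d)} [IsFiniteMeasure ν] {f : Ed d → ℝ}
    (hcont : Continuous f) (habs : ∀ x, |f x| ≤ 1) : Integrable f ν :=
  (integrable_const (1:ℝ)).mono' hcont.aestronglyMeasurable
    (Filter.Eventually.of_forall fun x => by simpa [Real.norm_eq_abs] using habs x)

lemma abs_integral_le {ν : Measure (Ed d)} [IsFiniteMeasure ν] {f : Ed d → ℝ}
    (hcont : Continuous f) (habs : ∀ x, |f x| ≤ 1) :
    |∫ x, f x ∂ν| ≤ (ν Set.univ).toReal := by
  rw [← Real.norm_eq_abs, ← setIntegral_univ]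
  calc ‖∫ x in Set.univ, f x ∂ν‖ ≤ 1 * (ν Set.univ).toReal := by
        apply norm_setIntegral_le_of_norm_le_const (measure_lt_top ν _)
          (fun x _ => by simpa [Real.norm_eq_abs] using habs x)
    _ = (ν Set.univ).toReal := one_mul _

end Helpers

/-- Key estimate: replacing a finite measure by point masses on a disjoint family of
small sets, against a bounded 1-Lipschitz function. -/
lemma approx_estimate {d : ℕ} (ν : Measure (Ed d)) [IsFiniteMeasure ν] {f : Ed d → ℝ}
    (hcont : Continuous f) (habs : ∀ x, |f x| ≤ 1) (hlip : ∀ x y, |f x - f y| ≤ dist x y)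
    {n : ℕ} (B : Fin n → Set (Ed d)) (p : Fin n → Ed d) {δ : ℝ} (hδ0 : 0 ≤ δ)
    (hmeas : ∀ k, MeasurableSet (B k)) (hdisj : Pairwise (Function.onFun Disjoint B))
    (hsub : ∀ k, B k ⊆ closedBall (p k) δ) :
    |(∫ x, f x ∂ν) - ∑ k, (ν (B k)).toReal * f (p k)| ≤
      δ * (ν Set.univ).toReal + (ν (⋃ k, B k)ᶜ).toReal := by
  have hint : Integrable f ν := integrable_of_bounded hcont habs
  set U := ⋃ k, B k with hUdef
  have hU : MeasurableSet U := MeasurableSet.iUnion hmeas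
  have hsplit : (∫ x, f x ∂ν) = (∫ x in U, f x ∂ν) + ∫ x in Uᶜ, f x ∂ν :=
    (integral_add_compl hU hint).symm
  have hUn : (∫ x in U, f x ∂ν) = ∑ k, ∫ x in B k, f x ∂ν := by
    rw [show U = ⋃ k ∈ Finset.univ, B k by simp [hUdef]]
    rw [integral_biUnion_finset Finset.univ (fun i _ => hmeas i)
      (hdisj.set_pairwise _) (fun i _ => hint.integrableOn)]
  have key : (∫ x, f x ∂ν) - ∑ k, (ν (B k)).toReal * f (p k)
      = (∑ k, ((∫ x in B k, f x ∂ν) - (ν (B k)).toReal * f (p k))) + ∫ x in Uᶜ, f x ∂ν := by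
    rw [hsplit, hUn, Finset.sum_sub_distrib]; ring
  rw [key]
  have hterm : ∀ k, |(∫ x in B k, f x ∂ν) - (ν (B k)).toReal * f (p k)|
      ≤ δ * (ν (B k)).toReal := by
    intro k
    have hconst : (∫ x in B k, f (p k) ∂ν) = (ν (B k)).toReal * f (p k) := by
      rw [setIntegral_const, smul_eq_mul]; rfl
    have hsub' : (∫ x in B k, f x ∂ν) - (ν (B k)).toReal * f (p k)
        = ∫ x in B k, (f x - f (p k)) ∂ν := by
      rw [integral_sub hint.integrableOn (integrableOn_const (measure_ne_top ν _)),
        hconst]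
    rw [hsub', ← Real.norm_eq_abs]
    apply norm_setIntegral_le_of_norm_le_const (measure_lt_top ν _)
    · intro x hx
      rw [Real.norm_eq_abs]
      exact (hlip x (p k)).trans (hsub k hx)
  have hsum : (∑ k, (ν (B k)).toReal) ≤ (ν Set.univ).toReal := by
    have h1 : (∑ k, ν (B k)) = ν U := by
      rw [hUdef, measure_iUnion hdisj hmeas, tsum_fintype]
    have h2 : (∑ k, (ν (B k)).toReal) = (∑ k, ν (B k)).toReal := by
      rw [ENNReal.toReal_sum (fun a _ => (measure_lt_top ν _).ne)]
    rw [h2, h1]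
    exact ENNReal.toReal_mono (measure_ne_top ν _) (measure_mono (Set.subset_univ _))
  have htail : |∫ x in Uᶜ, f x ∂ν| ≤ (ν Uᶜ).toReal := by
    rw [← Real.norm_eq_abs]
    calc ‖∫ x in Uᶜ, f x ∂ν‖ ≤ 1 * (ν Uᶜ).toReal := by
          apply norm_setIntegral_le_of_norm_le_const (measure_lt_top ν _)
            (fun x _ => by simpa [Real.norm_eq_abs] using habs x)
      _ = (ν Uᶜ).toReal := one_mul _
  calc |(∑ k, ((∫ x in B k, f x ∂ν) - (ν (B k)).toReal * f (p k))) + ∫ x in Uᶜ, f x ∂ν|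
      ≤ |∑ k, ((∫ x in B k, f x ∂ν) - (ν (B k)).toReal * f (p k))| + |∫ x in Uᶜ, f x ∂ν| :=
        abs_add_le _ _
    _ ≤ (∑ k, |(∫ x in B k, f x ∂ν) - (ν (B k)).toReal * f (p k)|) + (ν Uᶜ).toReal :=
        add_le_add (Finset.abs_sum_le_sum_abs _ _) htail
    _ ≤ (∑ k, δ * (ν (B k)).toReal) + (ν Uᶜ).toReal :=
        add_le_add_left (Finset.sum_le_sum fun k _ => hterm k) _
    _ = δ * (∑ k, (ν (B k)).toReal) + (ν Uᶜ).toReal := by rw [Finset.mul_sum]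
    _ ≤ δ * (ν Set.univ).toReal + (ν Uᶜ).toReal :=
        add_le_add_left (mul_le_mul_of_nonneg_left hsum hδ0) _

/-- An enumeration of rational points that is δ-dense for every δ > 0. -/
lemma exists_rat_seq (d : ℕ) : ∃ q : ℕ → Ed d, (∀ k, IsRatPoint (q k)) ∧
    ∀ (x : Ed d) (δ : ℝ), 0 < δ → ∃ k, dist x (q k) ≤ δ := by
  obtain ⟨e, he⟩ := exists_surjective_nat (Fin d → ℚ)
  refine ⟨fun k => WithLp.toLp 2 (fun i => ((e k i : ℝ))), fun k i => ⟨e k i, rfl⟩, ?_⟩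
  intro x δ hδ
  set t : ℝ := δ / (Real.sqrt d + 1) with ht
  have hsd : (0:ℝ) ≤ Real.sqrt d := Real.sqrt_nonneg _
  have htpos : 0 < t := div_pos hδ (by linarith)
  have hchoice : ∀ i : Fin d, ∃ r : ℚ, |x i - (r:ℝ)| ≤ t := fun i => by
    obtain ⟨r, hr⟩ := exists_rat_near (x i) htpos
    exact ⟨r, hr.le⟩
  choose v hv using hchoice
  obtain ⟨k, hk⟩ := he v
  refine ⟨k, ?_⟩
  have hcoord : ∀ i, dist (x i) ((e k i : ℝ)) ≤ t := by
    intro i; rw [hk, Real.dist_eq]; exact hv i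
  have hdist : dist x (WithLp.toLp 2 (fun i => ((e k i : ℝ)))) ≤ Real.sqrt (∑ _i : Fin d, t ^ 2) := by
    rw [EuclideanSpace.dist_eq]
    apply Real.sqrt_le_sqrt
    apply Finset.sum_le_sum
    intro i _
    have := hcoord i
    have h0 : (0:ℝ) ≤ dist (x i) ((e k i : ℝ)) := dist_nonneg
    calc dist (x i) ((e k i : ℝ)) ^ 2 ≤ t ^ 2 := by nlinarith
      _ = t ^ 2 := rfl
  refine hdist.trans ?_
  have : Real.sqrt (∑ _i : Fin d, t ^ 2) = Real.sqrt d * t := by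
    rw [Finset.sum_const, Finset.card_univ, Fintype.card_fin, nsmul_eq_mul,
      Real.sqrt_mul (by positivity), Real.sqrt_sq htpos.le]
  rw [this, ht]
  calc Real.sqrt d * (δ / (Real.sqrt d + 1)) = δ * (Real.sqrt d / (Real.sqrt d + 1)) := by ring
    _ ≤ δ * 1 := by
        apply mul_le_mul_of_nonneg_left _ hδ.le
        rw [div_le_one (by linarith)]; linarith
    _ = δ := mul_one δ

/-- Tail bound: for a finite measure, the complement of a large initial union of the
covering balls has small measure. -/
lemma exists_tail_bound {d : ℕ} (ν : Measure (Ed d)) [IsFiniteMeasure ν]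
    (q : ℕ → Ed d) {δ : ℝ} (hδ : 0 < δ) (hcover : ∀ x : Ed d, ∃ k, dist x (q k) ≤ δ)
    (ε : ℝ) (hε : 0 < ε) :
    ∃ N, ∀ m ≥ N, (ν (⋃ i ≤ m, closedBall (q i) δ)ᶜ).toReal ≤ ε := by
  set A : ℕ → Set (Ed d) := fun m => ⋃ i ≤ m, closedBall (q i) δ with hA
  have hAmeas : ∀ m, MeasurableSet (A m) := fun m =>
    MeasurableSet.biUnion (Set.to_countable _) (fun i _ => measurableSet_closedBall)
  have hmono : Monotone A := fun m m' h =>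
    Set.biUnion_subset_biUnion_left (fun i hi => le_trans hi h)
  have hunion : (⋃ m, A m) = Set.univ := by
    rw [Set.eq_univ_iff_forall]
    intro x
    obtain ⟨k, hk⟩ := hcover x
    exact Set.mem_iUnion.2 ⟨k, Set.mem_biUnion (le_refl k) (mem_closedBall.2 hk)⟩
  have htend : Filter.Tendsto (fun m => ν (A m)) Filter.atTop (nhds (ν Set.univ)) := by
    have := tendsto_measure_iUnion_atTop (μ := ν) hmono
    rwa [hunion] at this
  have htoReal : Filter.Tendsto (fun m => (ν (A m)).toReal) Filter.atTop
      (nhds ((ν Set.univ).toReal)) :=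
    (ENNReal.tendsto_toReal (measure_ne_top ν _)).comp htend
  have hev : ∀ᶠ m in Filter.atTop, (ν Set.univ).toReal - (ν (A m)).toReal ≤ ε := by
    have := htoReal.eventually (eventually_ge_nhds (show (ν Set.univ).toReal - ε < (ν Set.univ).toReal by linarith))
    filter_upwards [this] with m hm
    linarith
  obtain ⟨N, hN⟩ := hev.exists_forall_of_atTop
  refine ⟨N, fun m hm => ?_⟩
  have hcompl : ν (A m)ᶜ = ν Set.univ - ν (A m) := measure_compl (hAmeas m) (measure_ne_top ν _)
  rw [hcompl, ENNReal.toReal_sub_of_le (measure_mono (Set.subset_univ _)) (measure_ne_top ν _)]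
  exact hN m hm

/-- Part 1: density of rational Dirac combinations. -/
lemma part1 {d : ℕ} (α : ℝ) (hα : 0 < α) (s : SignedMeasure (Ed d)) (ε : ℝ) (hε : 0 < ε) :
    ∃ (n : ℕ) (c : Fin n → ℝ) (g : Fin n → Ed d), (∀ i, IsRatPoint (g i)) ∧
      dualNorm α (fun f => sPair s f - ∑ i, c i * f (g i)) ≤ ε := by
  set μp := s.toJordanDecomposition.posPart with hμp
  set μn := s.toJordanDecomposition.negPart with hμn
  set M := (μp Set.univ).toReal + (μn Set.univ).toReal with hM
  have hM0 : 0 ≤ M := add_nonneg ENNReal.toReal_nonneg ENNReal.toReal_nonneg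
  set δ := ε / (4 * (M + 1)) with hδdef
  have hδ : 0 < δ := by positivity
  obtain ⟨q, hqrat, hqcov⟩ := exists_rat_seq d
  obtain ⟨N1, hN1⟩ := exists_tail_bound μp q hδ (fun x => hqcov x δ hδ) (ε/8) (by positivity)
  obtain ⟨N2, hN2⟩ := exists_tail_bound μn q hδ (fun x => hqcov x δ hδ) (ε/8) (by positivity)
  set N := max N1 N2 with hN
  set C : ℕ → Set (Ed d) := fun i => closedBall (q i) δ with hC
  set D : ℕ → Set (Ed d) := disjointed C with hD
  refine ⟨N+1, fun k => (μp (D k)).toReal - (μn (D k)).toReal, fun k => q k,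
    fun k => hqrat k, ?_⟩
  apply dualNorm_le hα
  intro f hf hnrm
  have habs := abs_le_one_of_mem hf hnrm
  have hlip := lipschitz_of_mem hf hnrm
  have hcont := hf.1.continuous
  have hUeq : (⋃ k : Fin (N+1), D ↑k) = ⋃ i ≤ N, C i := by
    have h1 : (⋃ k : Fin (N+1), D ↑k) = ⋃ i ≤ N, D i := by
      ext x
      simp only [Set.mem_iUnion]
      constructor
      · rintro ⟨k, hk⟩; exact ⟨k, Fin.is_le k, hk⟩
      · rintro ⟨i, hi, hx⟩; exact ⟨⟨i, by omega⟩, hx⟩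
    have h2 : (⋃ i ≤ N, D i) = partialSups D N := by
      rw [partialSups_eq_biSup]; rfl
    have h3 : (⋃ i ≤ N, C i) = partialSups C N := by
      rw [partialSups_eq_biSup]; rfl
    rw [h1, h2, h3, hD, partialSups_disjointed]
  have hmeasD : ∀ k : Fin (N+1), MeasurableSet (D ↑k) :=
    fun k => MeasurableSet.disjointed (fun i => measurableSet_closedBall) _
  have hdisjD : Pairwise (Function.onFun Disjoint (fun k : Fin (N+1) => D ↑k)) :=
    fun i j hij => disjoint_disjointed C (Fin.val_injective.ne hij)
  have hsubD : ∀ k : Fin (N+1), D ↑k ⊆ closedBall (q ↑k) δ :=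
    fun k => disjointed_subset C _
  have hp := approx_estimate μp hcont habs hlip (fun k : Fin (N+1) => D ↑k)
    (fun k => q ↑k) hδ.le hmeasD hdisjD hsubD
  have hq' := approx_estimate μn hcont habs hlip (fun k : Fin (N+1) => D ↑k)
    (fun k => q ↑k) hδ.le hmeasD hdisjD hsubD
  rw [hUeq] at hp hq'
  have htail1 : (μp (⋃ i ≤ N, C i)ᶜ).toReal ≤ ε/8 := hN1 N (le_max_left _ _)
  have htail2 : (μn (⋃ i ≤ N, C i)ᶜ).toReal ≤ ε/8 := hN2 N (le_max_right _ _)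
  have hδM : δ * (μp Set.univ).toReal + δ * (μn Set.univ).toReal ≤ ε/4 := by
    have : δ * (μp Set.univ).toReal + δ * (μn Set.univ).toReal = δ * M := by rw [hM]; ring
    rw [this, hδdef]
    rw [div_mul_eq_mul_div, div_le_div_iff₀ (by positivity) (by norm_num)]
    nlinarith
  have hkey : sPair s f - ∑ k : Fin (N+1), ((μp (D ↑k)).toReal - (μn (D ↑k)).toReal) * f (q ↑k)
      = ((∫ x, f x ∂μp) - ∑ k : Fin (N+1), (μp (D ↑k)).toReal * f (q ↑k))
        - ((∫ x, f x ∂μn) - ∑ k : Fin (N+1), (μn (D ↑k)).toReal * f (q ↑k)) := by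
    rw [sPair, ← hμp, ← hμn]
    rw [show ∀ g1 g2 : Fin (N+1) → ℝ, (∑ k, ((g1 k) - (g2 k)) * f (q ↑k))
      = (∑ k, g1 k * f (q ↑k)) - ∑ k, g2 k * f (q ↑k) from fun g1 g2 => by
        rw [← Finset.sum_sub_distrib]; congr 1; ext k; ring]
    ring
  rw [hkey]
  calc |((∫ x, f x ∂μp) - ∑ k : Fin (N+1), (μp (D ↑k)).toReal * f (q ↑k))
        - ((∫ x, f x ∂μn) - ∑ k : Fin (N+1), (μn (D ↑k)).toReal * f (q ↑k))|
      ≤ |(∫ x, f x ∂μp) - ∑ k : Fin (N+1), (μp (D ↑k)).toReal * f (q ↑k)|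
        + |(∫ x, f x ∂μn) - ∑ k : Fin (N+1), (μn (D ↑k)).toReal * f (q ↑k)| := abs_sub _ _
    _ ≤ (δ * (μp Set.univ).toReal + (μp (⋃ i ≤ N, C i)ᶜ).toReal)
        + (δ * (μn Set.univ).toReal + (μn (⋃ i ≤ N, C i)ᶜ).toReal) := add_le_add hp hq'
    _ ≤ ε/4 + (ε/8 + ε/8) := by linarith
    _ ≤ ε := by linarith

/-- Bound for |sPair s f| when |f| ≤ 1. -/
lemma abs_sPair_le {d : ℕ} (s : SignedMeasure (Ed d)) {f : Ed d → ℝ}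
    (hcont : Continuous f) (habs : ∀ x, |f x| ≤ 1) :
    |sPair s f| ≤ (s.toJordanDecomposition.posPart Set.univ).toReal
      + (s.toJordanDecomposition.negPart Set.univ).toReal := by
  rw [sPair]
  calc |(∫ x, f x ∂s.toJordanDecomposition.posPart) - ∫ x, f x ∂s.toJordanDecomposition.negPart|
      ≤ |∫ x, f x ∂s.toJordanDecomposition.posPart| + |∫ x, f x ∂s.toJordanDecomposition.negPart| :=
        abs_sub _ _
    _ ≤ _ := add_le_add (abs_integral_le hcont habs) (abs_integral_le hcont habs)

/-- The countable family of rational Dirac combinations. -/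
def ratCombos (d : ℕ) : Set ((Ed d → ℝ) → ℝ) :=
  Set.range (fun t : (Σ n : ℕ, (Fin n → ℚ) × (Fin n → Fin d → ℚ)) =>
    fun f : Ed d → ℝ => ∑ i, (t.2.1 i : ℝ) * f (WithLp.toLp 2 (fun j => ((t.2.2 i j : ℝ)))))

lemma ratCombos_countable (d : ℕ) : (ratCombos d).Countable := Set.countable_range _

/-- Part 2: separability of Z. -/
lemma part2 {d : ℕ} (α : ℝ) (hα : 0 < α) (z : (Ed d → ℝ) → ℝ) (hz : InZM α z)
    (ε : ℝ) (hε : 0 < ε) :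
    ∃ y ∈ ratCombos d, dualNorm α (fun f => z f - y f) ≤ ε := by
  by_cases hb : BddAbove {r | ∃ f, MemC1a α f ∧ c1aNorm α f ≤ 1 ∧ r = |z f|}
  · -- bounded case
    obtain ⟨Bz, hBz⟩ := hb
    have hzf : ∀ f, MemC1a α f → c1aNorm α f ≤ 1 → |z f| ≤ Bz := fun f hf hn =>
      hBz ⟨f, hf, hn, rfl⟩
    obtain ⟨s, hs⟩ := hz (ε/3) (by positivity)
    set Ms := (s.toJordanDecomposition.posPart Set.univ).toReal
      + (s.toJordanDecomposition.negPart Set.univ).toReal with hMs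
    -- pointwise bound |z f - sPair s f| ≤ ε/3
    have hpt1 : ∀ f, MemC1a α f → c1aNorm α f ≤ 1 → |z f - sPair s f| ≤ ε/3 := by
      intro f hf hn
      have hbdd : BddAbove {r | ∃ f, MemC1a α f ∧ c1aNorm α f ≤ 1 ∧ r = |z f - sPair s f|} := by
        refine ⟨Bz + Ms, ?_⟩
        rintro r ⟨g, hg, hgn, rfl⟩
        calc |z g - sPair s g| ≤ |z g| + |sPair s g| := abs_sub _ _
          _ ≤ Bz + Ms := add_le_add (hzf g hg hgn)
              (abs_sPair_le s hg.1.continuous (abs_le_one_of_mem hg hgn))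
      exact le_trans (le_csSup hbdd ⟨f, hf, hn, rfl⟩) hs
    obtain ⟨n, c, g, hgrat, hd⟩ := part1 α hα s (ε/3) (by positivity)
    -- pointwise bound for |sPair s f - combo f|
    have hpt2 : ∀ f, MemC1a α f → c1aNorm α f ≤ 1 →
        |sPair s f - ∑ i, c i * f (g i)| ≤ ε/3 := by
      intro f hf hn
      have hbdd : BddAbove {r | ∃ f, MemC1a α f ∧ c1aNorm α f ≤ 1 ∧
          r = |sPair s f - ∑ i, c i * f (g i)|} := by
        refine ⟨Ms + ∑ i, |c i|, ?_⟩
        rintro r ⟨g', hg', hgn', rfl⟩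
        have h2 : |∑ i, c i * g' (g i)| ≤ ∑ i, |c i| := by
          calc |∑ i, c i * g' (g i)| ≤ ∑ i, |c i * g' (g i)| := Finset.abs_sum_le_sum_abs _ _
            _ ≤ ∑ i, |c i| := Finset.sum_le_sum fun i _ => by
                rw [abs_mul]
                calc |c i| * |g' (g i)| ≤ |c i| * 1 :=
                    mul_le_mul_of_nonneg_left (abs_le_one_of_mem hg' hgn' _) (abs_nonneg _)
                  _ = |c i| := mul_one _
        calc |sPair s g' - ∑ i, c i * g' (g i)| ≤ |sPair s g'| + |∑ i, c i * g' (g i)| :=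
            abs_sub _ _
          _ ≤ Ms + ∑ i, |c i| := add_le_add
              (abs_sPair_le s hg'.1.continuous (abs_le_one_of_mem hg' hgn')) h2
      exact le_trans (le_csSup hbdd ⟨f, hf, hn, rfl⟩) hd
    -- rationalize coefficients and points
    have hc' : ∀ i : Fin n, ∃ r : ℚ, |c i - (r:ℝ)| ≤ ε/(3*(n+1)) := fun i => by
      obtain ⟨r, hr⟩ := exists_rat_near (c i) (show (0:ℝ) < ε/(3*(n+1)) by positivity)
      exact ⟨r, hr.le⟩
    choose c' hc' using hc'
    have hv : ∀ (i : Fin n) (j : Fin d), ∃ r : ℚ, g i j = (r : ℝ) := fun i j => hgrat i j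
    choose v hv using hv
    have hgv : ∀ i, (fun j => ((v i j : ℝ))) = g i := fun i => funext fun j => (hv i j).symm
    refine ⟨fun f => ∑ i, (c' i : ℝ) * f (WithLp.toLp 2 (fun j => ((v i j : ℝ)))), ⟨⟨n, c', v⟩, rfl⟩, ?_⟩
    apply dualNorm_le hα
    intro f hf hn
    have h3 : |(∑ i, c i * f (g i)) - ∑ i, (c' i : ℝ) * f (WithLp.toLp 2 (fun j => ((v i j : ℝ))))| ≤ ε/3 := by
      have : (∑ i, c i * f (g i)) - (∑ i, (c' i : ℝ) * f (WithLp.toLp 2 (fun j => ((v i j : ℝ)))))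
          = ∑ i, (c i - (c' i : ℝ)) * f (g i) := by
        rw [← Finset.sum_sub_distrib]
        congr 1; ext i; rw [hgv i, WithLp.toLp_ofLp]; ring
      rw [this]
      calc |∑ i, (c i - (c' i : ℝ)) * f (g i)| ≤ ∑ i, |(c i - (c' i : ℝ)) * f (g i)| :=
          Finset.abs_sum_le_sum_abs _ _
        _ ≤ ∑ _i : Fin n, ε/(3*(n+1)) := Finset.sum_le_sum fun i _ => by
            rw [abs_mul]
            calc |c i - (c' i:ℝ)| * |f (g i)| ≤ (ε/(3*(n+1))) * 1 :=
                mul_le_mul (hc' i) (abs_le_one_of_mem hf hn _) (abs_nonneg _) (by positivity)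
              _ = ε/(3*(n+1)) := mul_one _
        _ = n * (ε/(3*(n+1))) := by rw [Finset.sum_const, Finset.card_univ,
            Fintype.card_fin, nsmul_eq_mul]
        _ ≤ ε/3 := by
            rw [mul_div_assoc', div_le_div_iff₀ (by positivity) (by norm_num : (0:ℝ) < 3)]
            nlinarith [Nat.cast_nonneg (α := ℝ) n, hε.le]
    calc |z f - ∑ i, (c' i : ℝ) * f (WithLp.toLp 2 (fun j => ((v i j : ℝ))))|
        ≤ |z f - sPair s f| + |sPair s f - ∑ i, (c' i : ℝ) * f (WithLp.toLp 2 (fun j => ((v i j : ℝ))))| := by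
          have : z f - ∑ i, (c' i : ℝ) * f (WithLp.toLp 2 (fun j => ((v i j : ℝ))))
            = (z f - sPair s f) + (sPair s f - ∑ i, (c' i : ℝ) * f (WithLp.toLp 2 (fun j => ((v i j : ℝ))))) := by ring
          rw [this]; exact abs_add_le _ _
      _ ≤ |z f - sPair s f| + (|sPair s f - ∑ i, c i * f (g i)|
            + |(∑ i, c i * f (g i)) - ∑ i, (c' i : ℝ) * f (WithLp.toLp 2 (fun j => ((v i j : ℝ))))|) := by
          have : sPair s f - ∑ i, (c' i : ℝ) * f (WithLp.toLp 2 (fun j => ((v i j : ℝ))))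
            = (sPair s f - ∑ i, c i * f (g i))
              + ((∑ i, c i * f (g i)) - ∑ i, (c' i : ℝ) * f (WithLp.toLp 2 (fun j => ((v i j : ℝ))))) := by ring
          exact add_le_add_right (by rw [this]; exact abs_add_le _ _) _
      _ ≤ ε/3 + (ε/3 + ε/3) := add_le_add (hpt1 f hf hn) (add_le_add (hpt2 f hf hn) h3)
      _ = ε := by ring
  · -- unbounded case: the dual norm of z - 0 is 0 by the sSup convention
    have hymem : (fun _ : Ed d → ℝ => (0:ℝ)) ∈ ratCombos d :=
      ⟨⟨0, fun _ => 0, fun _ _ => 0⟩, by funext f; simp⟩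
    refine ⟨fun _ => 0, hymem, ?_⟩
    have hset : {r | ∃ f, MemC1a α f ∧ c1aNorm α f ≤ 1 ∧ r = |z f - (0:ℝ)|}
        = {r | ∃ f, MemC1a α f ∧ c1aNorm α f ≤ 1 ∧ r = |z f|} := by
      ext r
      constructor
      · rintro ⟨f, hf, hn, rfl⟩; exact ⟨f, hf, hn, by rw [sub_zero]⟩
      · rintro ⟨f, hf, hn, rfl⟩; exact ⟨f, hf, hn, by rw [sub_zero]⟩
    rw [dualNorm, hset, Real.sSup_of_not_bddAbove hb]
    exact hε.le

/-- span{δ_x : x ∈ ℚ^d} is dense in M(ℝ^d) for the dual norm of C^{1+α}(ℝ^d);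
consequently Z, the closure of M(ℝ^d) in (C^{1+α}(ℝ^d))*, is separable. -/
theorem dense_rational_diracs_and_separable (d : ℕ) (α : ℝ) (hα : 0 < α) (hα1 : α ≤ 1) :
    (∀ (s : SignedMeasure (Ed d)) (ε : ℝ), 0 < ε →
      ∃ (n : ℕ) (c : Fin n → ℝ) (g : Fin n → Ed d), (∀ i, IsRatPoint (g i)) ∧
        dualNorm α (fun f => sPair s f - ∑ i, c i * f (g i)) ≤ ε) ∧
    (∃ S : Set ((Ed d → ℝ) → ℝ), S.Countable ∧
      ∀ z : (Ed d → ℝ) → ℝ, InZM α z → ∀ ε > (0 : ℝ), ∃ y ∈ S,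
        dualNorm α (fun f => z f - y f) ≤ ε) :=
  ⟨fun s ε hε => part1 α hα s ε hε,
    ⟨ratCombos d, ratCombos_countable d, fun z hz ε hε => part2 α hα z hz ε hε⟩⟩
end
end

section
/- Let μ_t^h = X(t,·;h)#( e^{∫₀ᵗ w(s, X(s,·;h)) ds} μ₀ ) with X(t,y;h) the flow of b + h b₁, where b, b₁ ∈ C⁰([0,∞); C^{1+α}(ℝ^d)) and w ∈ C^{1+α}([0,∞)×ℝ^d), and μ₀ a probability measure. Then for each fixed t ≥ 0, the map h ↦ μ_t^h from [−1/2,1/2] into (C^{1+α}(ℝ^d))* is Lipschitz: ‖μ_t^{h₁} − μ_t^{h₂}‖_{(C^{1+α})*} ≤ C(t) |h₁ − h₂| for a constant C(t) independent of h₁, h₂. -/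
open MeasureTheory Metric Filter
open scoped NNReal ENNReal BigOperators Topology

noncomputable section

/-- b ∈ C⁰([0,∞); C^{1+α}(ℝ^d)): continuous in time with values that are bounded C¹
vector fields, with bounded α-Hölder space derivative, uniformly in time. -/
def VecTimeC1a {d : ℕ} (α : ℝ) (b : ℝ → Ed d → Ed d) : Prop :=
  Continuous (Function.uncurry b) ∧ (∀ t, ContDiff ℝ 1 (b t)) ∧
    (∃ M : ℝ, ∀ t x, ‖b t x‖ + ‖fderiv ℝ (b t) x‖ ≤ M) ∧
    ∃ C : ℝ≥0, ∀ t, HolderWith C α.toNNReal (fderiv ℝ (b t))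

/-- w ∈ C^{1+α}([0,∞)×ℝ^d), encoded as: jointly continuous, C¹ and bounded in space
with bounded α-Hölder spatial gradient, uniformly in time. -/
def ScalTimeC1a {d : ℕ} (α : ℝ) (w : ℝ → Ed d → ℝ) : Prop :=
  Continuous (Function.uncurry w) ∧ (∀ t, ContDiff ℝ 1 (w t)) ∧
    (∃ M : ℝ, ∀ t x, |w t x| + ‖fderiv ℝ (w t) x‖ ≤ M) ∧
    ∃ C : ℝ≥0, ∀ t, HolderWith C α.toNNReal (fderiv ℝ (w t))

/-- The perturbed solution μ_t^h = X(t,·;h)#( e^{∫₀ᵗ w(s,X(s,·;h)) ds} μ₀ ). -/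
def muSol {d : ℕ} (X : ℝ → Ed d → ℝ → Ed d) (w : ℝ → Ed d → ℝ)
    (μ₀ : Measure (Ed d)) (t h : ℝ) : Measure (Ed d) :=
  Measure.map (fun y => X t y h)
    (μ₀.withDensity fun y =>
      ENNReal.ofReal (Real.exp (∫ s in (0:ℝ)..t, w s (X s y h))))

lemma abs_exp_sub_exp_le {a b c : ℝ} (ha : a ≤ c) (hb : b ≤ c) :
    |Real.exp a - Real.exp b| ≤ Real.exp c * |a - b| := by
  wlog hab : b ≤ a with H
  · rw [abs_sub_comm, abs_sub_comm a b]
    exact H hb ha (le_of_not_ge hab)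
  rw [abs_of_nonneg (sub_nonneg.2 (Real.exp_le_exp.2 hab)), abs_of_nonneg (sub_nonneg.2 hab)]
  have key : Real.exp a - Real.exp b ≤ Real.exp a * (a - b) := by
    have h1 : Real.exp a * Real.exp (b - a) = Real.exp b := by
      rw [← Real.exp_add]; ring_nf
    have h2 : (b - a) + 1 ≤ Real.exp (b - a) := Real.add_one_le_exp _
    nlinarith [Real.exp_pos a]
  calc Real.exp a - Real.exp b ≤ Real.exp a * (a - b) := key
    _ ≤ Real.exp c * (a - b) :=
      mul_le_mul_of_nonneg_right (Real.exp_le_exp.2 ha) (sub_nonneg.2 hab)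

/-- Lipschitz dependence of the solution on the perturbation parameter in the dual norm
of C^{1+α}(ℝ^d): for fixed t ≥ 0, ‖μ_t^{h₁} − μ_t^{h₂}‖_{(C^{1+α})*} ≤ C(t)|h₁ − h₂|. -/
theorem solution_lipschitz_in_parameter (d : ℕ) (α : ℝ) (hα : 0 < α) (hα1 : α ≤ 1)
    (b b₁ : ℝ → Ed d → Ed d) (w : ℝ → Ed d → ℝ)
    (hb : VecTimeC1a α b) (hb₁ : VecTimeC1a α b₁) (hw : ScalTimeC1a α w)
    (μ₀ : Measure (Ed d)) [IsProbabilityMeasure μ₀]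
    (X : ℝ → Ed d → ℝ → Ed d)
    (hX0 : ∀ y h, X 0 y h = y)
    (hXode : ∀ (y : Ed d), ∀ h ∈ Set.Icc (-(1:ℝ)/2) (1/2), ∀ t : ℝ,
      HasDerivAt (fun τ => X τ y h) (b t (X t y h) + h • b₁ t (X t y h)) t) :
    ∀ t ≥ (0:ℝ), ∃ C : ℝ,
      ∀ h₁ ∈ Set.Icc (-(1:ℝ)/2) (1/2), ∀ h₂ ∈ Set.Icc (-(1:ℝ)/2) (1/2),
      dualNorm α (fun f =>
          (∫ x, f x ∂(muSol X w μ₀ t h₁)) - ∫ x, f x ∂(muSol X w μ₀ t h₂)) ≤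
        C * |h₁ - h₂| := by
  intro t ht
  obtain ⟨-, hbC1, ⟨Mb, hMb⟩, -⟩ := hb
  obtain ⟨-, hb1C1, ⟨M1, hM1⟩, -⟩ := hb₁
  obtain ⟨hwcont, hwC1, ⟨Mw, hMw⟩, -⟩ := hw
  have hMb0 : 0 ≤ Mb := le_trans (by positivity) (hMb 0 0)
  have hM10 : 0 ≤ M1 := le_trans (by positivity) (hM1 0 0)
  have hMw0 : 0 ≤ Mw := le_trans (by positivity) (hMw 0 0)
  set K : ℝ := Mb + M1 + 1 with hKdef
  have hK0 : 0 < K := by positivity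
  set D : ℝ := (Real.exp (K * t) - 1) / K with hDdef
  have hexp1 : 1 ≤ Real.exp (K * t) := Real.one_le_exp (by positivity)
  have hD0 : 0 ≤ D := div_nonneg (by linarith) hK0.le
  -- spatial Lipschitz bounds
  have hbLip : ∀ s (x y : Ed d), ‖b s x - b s y‖ ≤ Mb * ‖x - y‖ := fun s x y =>
    Convex.norm_image_sub_le_of_norm_fderiv_le
      (fun z _ => ((hbC1 s).differentiable one_ne_zero).differentiableAt)
      (fun z _ => le_trans (le_add_of_nonneg_left (norm_nonneg _)) (hMb s z))
      convex_univ (Set.mem_univ y) (Set.mem_univ x)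
  have hb1Lip : ∀ s (x y : Ed d), ‖b₁ s x - b₁ s y‖ ≤ M1 * ‖x - y‖ := fun s x y =>
    Convex.norm_image_sub_le_of_norm_fderiv_le
      (fun z _ => ((hb1C1 s).differentiable one_ne_zero).differentiableAt)
      (fun z _ => le_trans (le_add_of_nonneg_left (norm_nonneg _)) (hM1 s z))
      convex_univ (Set.mem_univ y) (Set.mem_univ x)
  have hwLip : ∀ s (x y : Ed d), |w s x - w s y| ≤ Mw * ‖x - y‖ := fun s x y => by
    have := Convex.norm_image_sub_le_of_norm_fderiv_le
      (fun z _ => ((hwC1 s).differentiable one_ne_zero).differentiableAt)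
      (fun z _ => le_trans (le_add_of_nonneg_left (abs_nonneg _)) (hMw s z))
      convex_univ (Set.mem_univ y) (Set.mem_univ x)
    simpa [Real.norm_eq_abs] using this
  have hb1bd : ∀ s (x : Ed d), ‖b₁ s x‖ ≤ M1 := fun s x =>
    le_trans (le_add_of_nonneg_right (norm_nonneg _)) (hM1 s x)
  have hwbd : ∀ s (x : Ed d), |w s x| ≤ Mw := fun s x =>
    le_trans (le_add_of_nonneg_right (norm_nonneg _)) (hMw s x)
  -- time continuity of the flow
  have hXt : ∀ (y : Ed d), ∀ h ∈ Set.Icc (-(1:ℝ)/2) (1/2), Continuous fun s => X s y h :=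
    fun y h hh => continuous_iff_continuousAt.2 fun s => (hXode y h hh s).continuousAt
  -- master Gronwall estimate
  have grw : ∀ (y y' : Ed d), ∀ h₁ ∈ Set.Icc (-(1:ℝ)/2) (1/2),
      ∀ h₂ ∈ Set.Icc (-(1:ℝ)/2) (1/2), ∀ s ∈ Set.Icc (0:ℝ) t,
      ‖X s y h₁ - X s y' h₂‖ ≤ gronwallBound (‖y - y'‖) K (M1 * |h₁ - h₂|) s := by
    intro y y' h₁ hh₁ h₂ hh₂
    have hcont : ContinuousOn (fun s => X s y h₁ - X s y' h₂) (Set.Icc 0 t) :=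
      ((hXt y h₁ hh₁).sub (hXt y' h₂ hh₂)).continuousOn
    have hderiv : ∀ s ∈ Set.Ico (0:ℝ) t,
        HasDerivWithinAt (fun τ => X τ y h₁ - X τ y' h₂)
          ((b s (X s y h₁) + h₁ • b₁ s (X s y h₁))
            - (b s (X s y' h₂) + h₂ • b₁ s (X s y' h₂))) (Set.Ici s) s :=
      fun s _ => ((hXode y h₁ hh₁ s).sub (hXode y' h₂ hh₂ s)).hasDerivWithinAt
    have hbound : ∀ s ∈ Set.Ico (0:ℝ) t,
        ‖(b s (X s y h₁) + h₁ • b₁ s (X s y h₁))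
          - (b s (X s y' h₂) + h₂ • b₁ s (X s y' h₂))‖
          ≤ K * ‖X s y h₁ - X s y' h₂‖ + M1 * |h₁ - h₂| := by
      intro s _
      set u := X s y h₁ with hu
      set v := X s y' h₂ with hv
      have e : (b s u + h₁ • b₁ s u) - (b s v + h₂ • b₁ s v)
          = (b s u - b s v) + (h₁ • (b₁ s u - b₁ s v) + (h₁ - h₂) • b₁ s v) := by
        simp only [smul_sub, sub_smul]; abel
      rw [e]
      have habs1 : |h₁| ≤ 1 := abs_le.2 ⟨by linarith [hh₁.1], by linarith [hh₁.2]⟩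
      have h1 : ‖b s u - b s v‖ ≤ Mb * ‖u - v‖ := hbLip s u v
      have h2 : ‖h₁ • (b₁ s u - b₁ s v)‖ ≤ M1 * ‖u - v‖ := by
        rw [norm_smul, Real.norm_eq_abs]
        calc |h₁| * ‖b₁ s u - b₁ s v‖ ≤ 1 * (M1 * ‖u - v‖) :=
              mul_le_mul habs1 (hb1Lip s u v) (norm_nonneg _) zero_le_one
          _ = M1 * ‖u - v‖ := one_mul _
      have h3 : ‖(h₁ - h₂) • b₁ s v‖ ≤ M1 * |h₁ - h₂| := by
        rw [norm_smul, Real.norm_eq_abs, mul_comm]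
        exact mul_le_mul_of_nonneg_right (hb1bd s v) (abs_nonneg _)
      calc ‖(b s u - b s v) + (h₁ • (b₁ s u - b₁ s v) + (h₁ - h₂) • b₁ s v)‖
          ≤ ‖b s u - b s v‖ + (‖h₁ • (b₁ s u - b₁ s v)‖ + ‖(h₁ - h₂) • b₁ s v‖) :=
            (norm_add_le _ _).trans (by gcongr; exact norm_add_le _ _)
        _ ≤ Mb * ‖u - v‖ + (M1 * ‖u - v‖ + M1 * |h₁ - h₂|) := by gcongr
        _ ≤ K * ‖u - v‖ + M1 * |h₁ - h₂| := by
            have : (0:ℝ) ≤ ‖u - v‖ := norm_nonneg _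
            nlinarith
    have h0 : ‖(fun τ => X τ y h₁ - X τ y' h₂) 0‖ ≤ ‖y - y'‖ := by simp [hX0]
    have := norm_le_gronwallBound_of_norm_deriv_right_le hcont hderiv h0 hbound
    intro s hs
    simpa using this s hs
  -- stability in h
  have grwA : ∀ (y : Ed d), ∀ h₁ ∈ Set.Icc (-(1:ℝ)/2) (1/2),
      ∀ h₂ ∈ Set.Icc (-(1:ℝ)/2) (1/2), ∀ s ∈ Set.Icc (0:ℝ) t,
      ‖X s y h₁ - X s y h₂‖ ≤ M1 * |h₁ - h₂| * D := by
    intro y h₁ hh₁ h₂ hh₂ s hs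
    have h := grw y y h₁ hh₁ h₂ hh₂ s hs
    rw [sub_self, norm_zero] at h
    refine h.trans ?_
    rw [gronwallBound_of_K_ne_0 hK0.ne']
    have hsle : Real.exp (K * s) ≤ Real.exp (K * t) :=
      Real.exp_le_exp.2 (mul_le_mul_of_nonneg_left hs.2 hK0.le)
    have h1 : Real.exp (K * s) - 1 ≤ Real.exp (K * t) - 1 := by linarith
    calc (0:ℝ) * Real.exp (K * s) + M1 * |h₁ - h₂| / K * (Real.exp (K * s) - 1)
        = M1 * |h₁ - h₂| * ((Real.exp (K * s) - 1) / K) := by ring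
      _ ≤ M1 * |h₁ - h₂| * ((Real.exp (K * t) - 1) / K) := by
          apply mul_le_mul_of_nonneg_left _ (by positivity)
          gcongr
      _ = M1 * |h₁ - h₂| * D := by rw [hDdef]
  -- Lipschitz in y
  have grwB : ∀ h ∈ Set.Icc (-(1:ℝ)/2) (1/2), ∀ (y y' : Ed d), ∀ s ∈ Set.Icc (0:ℝ) t,
      ‖X s y h - X s y' h‖ ≤ Real.exp (K * t) * ‖y - y'‖ := by
    intro h hh y y' s hs
    have hg := grw y y' h hh h hh s hs
    rw [sub_self, abs_zero, mul_zero, gronwallBound_ε0] at hg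
    refine hg.trans ?_
    calc ‖y - y'‖ * Real.exp (K * s) ≤ ‖y - y'‖ * Real.exp (K * t) :=
          mul_le_mul_of_nonneg_left
            (Real.exp_le_exp.2 (mul_le_mul_of_nonneg_left hs.2 hK0.le)) (norm_nonneg _)
      _ = Real.exp (K * t) * ‖y - y'‖ := mul_comm _ _
  -- the weight
  set Wf : ℝ → Ed d → ℝ := fun h y => ∫ s in (0:ℝ)..t, w s (X s y h) with hWfdef
  have hwXcont : ∀ h ∈ Set.Icc (-(1:ℝ)/2) (1/2), ∀ (y : Ed d),
      Continuous fun s => w s (X s y h) := fun h hh y =>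
    hwcont.comp (continuous_id.prodMk (hXt y h hh))
  have hWint : ∀ h ∈ Set.Icc (-(1:ℝ)/2) (1/2), ∀ (y : Ed d),
      IntervalIntegrable (fun s => w s (X s y h)) MeasureTheory.volume 0 t :=
    fun h hh y => ((hwXcont h hh y).intervalIntegrable 0 t)
  have hWbd : ∀ h ∈ Set.Icc (-(1:ℝ)/2) (1/2), ∀ (y : Ed d), |Wf h y| ≤ Mw * t := by
    intro h hh y
    have := intervalIntegral.norm_integral_le_of_norm_le_const
      (C := Mw) (f := fun s => w s (X s y h)) (a := 0) (b := t)
      (fun s _ => by simpa [Real.norm_eq_abs] using hwbd s (X s y h))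
    rw [Real.norm_eq_abs] at this
    simpa [abs_of_nonneg ht] using this
  have hWdiff : ∀ h₁ ∈ Set.Icc (-(1:ℝ)/2) (1/2), ∀ h₂ ∈ Set.Icc (-(1:ℝ)/2) (1/2),
      ∀ (y : Ed d), |Wf h₁ y - Wf h₂ y| ≤ Mw * (M1 * |h₁ - h₂| * D) * t := by
    intro h₁ hh₁ h₂ hh₂ y
    have heq : Wf h₁ y - Wf h₂ y
        = ∫ s in (0:ℝ)..t, (w s (X s y h₁) - w s (X s y h₂)) :=
      (intervalIntegral.integral_sub (hWint h₁ hh₁ y) (hWint h₂ hh₂ y)).symm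
    rw [heq]
    have := intervalIntegral.norm_integral_le_of_norm_le_const
      (C := Mw * (M1 * |h₁ - h₂| * D))
      (f := fun s => w s (X s y h₁) - w s (X s y h₂)) (a := 0) (b := t) ?_
    · rw [Real.norm_eq_abs] at this
      simpa [abs_of_nonneg ht] using this
    · intro s hs
      rw [Set.uIoc_of_le ht] at hs
      have hsI : s ∈ Set.Icc (0:ℝ) t := ⟨hs.1.le, hs.2⟩
      rw [Real.norm_eq_abs]
      calc |w s (X s y h₁) - w s (X s y h₂)| ≤ Mw * ‖X s y h₁ - X s y h₂‖ :=
            hwLip s _ _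
        _ ≤ Mw * (M1 * |h₁ - h₂| * D) :=
            mul_le_mul_of_nonneg_left (grwA y h₁ hh₁ h₂ hh₂ s hsI) hMw0
  have hWlipy : ∀ h ∈ Set.Icc (-(1:ℝ)/2) (1/2), ∀ (y y' : Ed d),
      |Wf h y - Wf h y'| ≤ Mw * Real.exp (K * t) * t * ‖y - y'‖ := by
    intro h hh y y'
    have heq : Wf h y - Wf h y'
        = ∫ s in (0:ℝ)..t, (w s (X s y h) - w s (X s y' h)) :=
      (intervalIntegral.integral_sub (hWint h hh y) (hWint h hh y')).symm
    rw [heq]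
    have := intervalIntegral.norm_integral_le_of_norm_le_const
      (C := Mw * (Real.exp (K * t) * ‖y - y'‖))
      (f := fun s => w s (X s y h) - w s (X s y' h)) (a := 0) (b := t) ?_
    · rw [Real.norm_eq_abs] at this
      calc |∫ s in (0:ℝ)..t, (w s (X s y h) - w s (X s y' h))|
          ≤ Mw * (Real.exp (K * t) * ‖y - y'‖) * |t - 0| := this
        _ = Mw * Real.exp (K * t) * t * ‖y - y'‖ := by
            rw [sub_zero, abs_of_nonneg ht]; ring
    · intro s hs
      rw [Set.uIoc_of_le ht] at hs
      have hsI : s ∈ Set.Icc (0:ℝ) t := ⟨hs.1.le, hs.2⟩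
      rw [Real.norm_eq_abs]
      calc |w s (X s y h) - w s (X s y' h)| ≤ Mw * ‖X s y h - X s y' h‖ := hwLip s _ _
        _ ≤ Mw * (Real.exp (K * t) * ‖y - y'‖) :=
            mul_le_mul_of_nonneg_left (grwB h hh y y' s hsI) hMw0
  -- continuity in y
  have hWcont : ∀ h ∈ Set.Icc (-(1:ℝ)/2) (1/2), Continuous (Wf h) := by
    intro h hh
    refine (LipschitzWith.of_dist_le_mul
      (K := Real.toNNReal (Mw * Real.exp (K * t) * t)) (f := Wf h) ?_).continuous
    intro y y'
    rw [Real.dist_eq, dist_eq_norm]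
    refine (hWlipy h hh y y').trans ?_
    apply mul_le_mul_of_nonneg_right _ (norm_nonneg _)
    exact le_of_eq (Real.coe_toNNReal _ (by positivity)).symm
  have hφcont : ∀ h ∈ Set.Icc (-(1:ℝ)/2) (1/2), Continuous fun y => X t y h := by
    intro h hh
    refine (LipschitzWith.of_dist_le_mul
      (K := Real.toNNReal (Real.exp (K * t))) (f := fun y => X t y h) ?_).continuous
    intro y y'
    rw [dist_eq_norm, dist_eq_norm]
    refine (grwB h hh y y' t ⟨ht, le_rfl⟩).trans ?_
    apply mul_le_mul_of_nonneg_right _ (norm_nonneg _)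
    exact le_of_eq (Real.coe_toNNReal _ (Real.exp_nonneg _)).symm
  -- integral representation
  have hrep : ∀ h ∈ Set.Icc (-(1:ℝ)/2) (1/2), ∀ (f : Ed d → ℝ), Continuous f →
      (∫ x, f x ∂(muSol X w μ₀ t h)) = ∫ y, Real.exp (Wf h y) * f (X t y h) ∂μ₀ := by
    intro h hh f hf
    unfold muSol
    rw [integral_map ((hφcont h hh).measurable.aemeasurable) hf.aestronglyMeasurable]
    have hdens : (fun y => ENNReal.ofReal (Real.exp (∫ s in (0:ℝ)..t, w s (X s y h))))
        = fun y => ((Real.toNNReal (Real.exp (Wf h y)) : ℝ≥0) : ℝ≥0∞) := rfl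
    have hmeas : Measurable fun y => Real.toNNReal (Real.exp (Wf h y)) :=
      (continuous_real_toNNReal.comp (Real.continuous_exp.comp (hWcont h hh))).measurable
    rw [hdens, integral_withDensity_eq_integral_smul hmeas (fun y => f (X t y h))]
    congr 1
    ext y
    rw [NNReal.smul_def, Real.coe_toNNReal _ (Real.exp_nonneg _)]
    rfl
  -- the final constant
  refine ⟨Real.exp (Mw * t) * (M1 * D) * (1 + Mw * t), ?_⟩
  intro h₁ hh₁ h₂ hh₂
  have hC0 : 0 ≤ Real.exp (Mw * t) * (M1 * D) * (1 + Mw * t) := by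
    have := mul_nonneg hMw0 ht
    have := mul_nonneg hM10 hD0
    positivity
  apply Real.sSup_le _ (mul_nonneg hC0 (abs_nonneg _))
  rintro r ⟨f, ⟨hfC1, hfbd, hfdbd, -⟩, hfnorm, rfl⟩
  -- bounds on f
  have hsup2 : 0 ≤ ⨆ x, ‖fderiv ℝ f x‖ := Real.iSup_nonneg fun _ => norm_nonneg _
  have hsup1 : 0 ≤ ⨆ x : Ed d, |f x| := Real.iSup_nonneg fun _ => abs_nonneg _
  have hsup3 : 0 ≤ holderSemi α (fderiv ℝ f) :=
    Real.iSup_nonneg fun _ => Real.iSup_nonneg fun _ =>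
      div_nonneg (norm_nonneg _) (Real.rpow_nonneg dist_nonneg _)
  rw [c1aNorm] at hfnorm
  have hs1 : ∀ x, |f x| ≤ 1 := fun x =>
    le_trans (le_ciSup hfbd x) (by linarith)
  have hsd : ∀ x, ‖fderiv ℝ f x‖ ≤ 1 := fun x =>
    le_trans (le_ciSup hfdbd x) (by linarith)
  have hfLip : ∀ u v : Ed d, |f u - f v| ≤ ‖u - v‖ := by
    intro u v
    have := Convex.norm_image_sub_le_of_norm_fderiv_le
      (fun z _ => (hfC1.differentiable one_ne_zero).differentiableAt)
      (fun z _ => hsd z) convex_univ (Set.mem_univ v) (Set.mem_univ u)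
    simpa [Real.norm_eq_abs] using this
  have hfc : Continuous f := hfC1.continuous
  show |(∫ x, f x ∂(muSol X w μ₀ t h₁)) - ∫ x, f x ∂(muSol X w μ₀ t h₂)|
      ≤ Real.exp (Mw * t) * (M1 * D) * (1 + Mw * t) * |h₁ - h₂|
  rw [hrep h₁ hh₁ f hfc, hrep h₂ hh₂ f hfc]
  -- integrability
  have hFbd : ∀ h ∈ Set.Icc (-(1:ℝ)/2) (1/2), ∀ y,
      ‖Real.exp (Wf h y) * f (X t y h)‖ ≤ Real.exp (Mw * t) := by
    intro h hh y
    rw [Real.norm_eq_abs, abs_mul, abs_of_nonneg (Real.exp_nonneg _)]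
    calc Real.exp (Wf h y) * |f (X t y h)| ≤ Real.exp (Mw * t) * 1 :=
        mul_le_mul (Real.exp_le_exp.2 ((le_abs_self _).trans (hWbd h hh y)))
          (hs1 _) (abs_nonneg _) (Real.exp_nonneg _)
      _ = Real.exp (Mw * t) := mul_one _
  have hFint : ∀ h ∈ Set.Icc (-(1:ℝ)/2) (1/2),
      Integrable (fun y => Real.exp (Wf h y) * f (X t y h)) μ₀ := by
    intro h hh
    refine Integrable.mono' (integrable_const (Real.exp (Mw * t)))
      (((Real.continuous_exp.comp (hWcont h hh)).mul
        (hfc.comp (hφcont h hh))).aestronglyMeasurable)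
      (Eventually.of_forall (hFbd h hh))
  rw [← integral_sub (hFint h₁ hh₁) (hFint h₂ hh₂)]
  -- pointwise bound
  have key : ∀ y, ‖Real.exp (Wf h₁ y) * f (X t y h₁) - Real.exp (Wf h₂ y) * f (X t y h₂)‖
      ≤ Real.exp (Mw * t) * (M1 * D) * (1 + Mw * t) * |h₁ - h₂| := by
    intro y
    have htmem : t ∈ Set.Icc (0:ℝ) t := ⟨ht, le_rfl⟩
    have hXd : ‖X t y h₁ - X t y h₂‖ ≤ M1 * |h₁ - h₂| * D := grwA y h₁ hh₁ h₂ hh₂ t htmem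
    have hWd : |Wf h₁ y - Wf h₂ y| ≤ Mw * (M1 * |h₁ - h₂| * D) * t := hWdiff h₁ hh₁ h₂ hh₂ y
    have hE : |Real.exp (Wf h₁ y) - Real.exp (Wf h₂ y)|
        ≤ Real.exp (Mw * t) * |Wf h₁ y - Wf h₂ y| :=
      abs_exp_sub_exp_le ((le_abs_self _).trans (hWbd h₁ hh₁ y))
        ((le_abs_self _).trans (hWbd h₂ hh₂ y))
    have e1 : Real.exp (Wf h₁ y) * f (X t y h₁) - Real.exp (Wf h₂ y) * f (X t y h₂)
        = Real.exp (Wf h₁ y) * (f (X t y h₁) - f (X t y h₂))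
          + (Real.exp (Wf h₁ y) - Real.exp (Wf h₂ y)) * f (X t y h₂) := by ring
    rw [Real.norm_eq_abs, e1]
    have t1 : |Real.exp (Wf h₁ y) * (f (X t y h₁) - f (X t y h₂))|
        ≤ Real.exp (Mw * t) * (M1 * |h₁ - h₂| * D) := by
      rw [abs_mul, abs_of_nonneg (Real.exp_nonneg _)]
      exact mul_le_mul (Real.exp_le_exp.2 ((le_abs_self _).trans (hWbd h₁ hh₁ y)))
        ((hfLip _ _).trans hXd) (abs_nonneg _) (Real.exp_nonneg _)
    have t2 : |(Real.exp (Wf h₁ y) - Real.exp (Wf h₂ y)) * f (X t y h₂)|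
        ≤ Real.exp (Mw * t) * (Mw * (M1 * |h₁ - h₂| * D) * t) := by
      rw [abs_mul]
      calc |Real.exp (Wf h₁ y) - Real.exp (Wf h₂ y)| * |f (X t y h₂)|
          ≤ (Real.exp (Mw * t) * |Wf h₁ y - Wf h₂ y|) * 1 :=
            mul_le_mul hE (hs1 _) (abs_nonneg _)
              (mul_nonneg (Real.exp_nonneg _) (abs_nonneg _))
        _ = Real.exp (Mw * t) * |Wf h₁ y - Wf h₂ y| := mul_one _
        _ ≤ Real.exp (Mw * t) * (Mw * (M1 * |h₁ - h₂| * D) * t) :=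
            mul_le_mul_of_nonneg_left hWd (Real.exp_nonneg _)
    calc |Real.exp (Wf h₁ y) * (f (X t y h₁) - f (X t y h₂))
          + (Real.exp (Wf h₁ y) - Real.exp (Wf h₂ y)) * f (X t y h₂)|
        ≤ |Real.exp (Wf h₁ y) * (f (X t y h₁) - f (X t y h₂))|
          + |(Real.exp (Wf h₁ y) - Real.exp (Wf h₂ y)) * f (X t y h₂)| := abs_add_le _ _
      _ ≤ Real.exp (Mw * t) * (M1 * |h₁ - h₂| * D)
          + Real.exp (Mw * t) * (Mw * (M1 * |h₁ - h₂| * D) * t) := add_le_add t1 t2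
      _ = Real.exp (Mw * t) * (M1 * D) * (1 + Mw * t) * |h₁ - h₂| := by ring
  have hnorm := norm_integral_le_of_norm_le_const (μ := μ₀)
    (f := fun y => Real.exp (Wf h₁ y) * f (X t y h₁) - Real.exp (Wf h₂ y) * f (X t y h₂))
    (Eventually.of_forall key)
  rw [Real.norm_eq_abs] at hnorm
  simpa [measure_univ] using hnorm
end
end
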